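/- The QAOA algorithm of depth p on a CSP instance whose interaction hypergraph is G is a generic 2p-local algorithm: for every vertex subset L, the joint distribution of the measured outputs at vertices in L depends only on the union of the p-neighborhoods of vertices in L, and the output bit at v is independent of the joint distribution of output bits at all vertices at distance greater than 2p from v. -/

import Mathlib

open MeasureTheory ProbabilityTheory Real Filter Finset
open scoped NNReal ENNReal ComplexOrder

/-- A `k`-uniform hypergraph on vertex set `Fin n`. -/
abbrev KHypergraph (n k : ℕ) := Multiset (Fin k → Fin n)

/-- Two vertices are adjacent if they lie in a common hyperedge. -/
def HAdj {n k : ℕ} (G : KHypergraph n k) (u v : Fin n) : Prop :=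
  ∃ e ∈ G, (∃ i, e i = u) ∧ (∃ i, e i = v)

open Classical in
/-- The `p`-neighborhood of a vertex set `L`. -/
noncomputable def ball {n k : ℕ} (G : KHypergraph n k) (L : Finset (Fin n)) :
    ℕ → Finset (Fin n)
  | 0 => L
  | p + 1 =>
      ball G L p ∪ Finset.univ.filter (fun v => ∃ u ∈ ball G L p, HAdj G u v)

/-- Computational basis configurations of `n` qubits. -/
abbrev Cfg (n : ℕ) := Fin n → Bool

/-- Operators on the Hilbert space of `n` qubits (in the computational basis). -/
abbrev QOp (n : ℕ) := Matrix (Cfg n) (Cfg n) ℂ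

/-- The diagonal cost Hamiltonian `C = Σ_{e ∈ G} f(x|_e)` of a CSP instance
whose interaction hypergraph is `G`, with local terms `f`. -/
noncomputable def costEnergy {n k : ℕ} (G : KHypergraph n k)
    (f : (Fin k → Bool) → ℝ) (x : Cfg n) : ℝ :=
  (G.map (fun e => f (fun i => x (e i)))).sum

/-- The phase-separation layer `e^{-iγC}` (a diagonal unitary). -/
noncomputable def phaseLayer {n k : ℕ} (G : KHypergraph n k)
    (f : (Fin k → Bool) → ℝ) (γ : ℝ) : QOp n :=
  Matrix.diagonal fun x => Complex.exp (-(Complex.I * γ * costEnergy G f x))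

/-- The mixing layer `e^{-iβB}` where `B = Σ_v X_v`; in closed form its entries
are products of `cos β` (unflipped bits) and `-i sin β` (flipped bits). -/
noncomputable def mixerLayer (n : ℕ) (β : ℝ) : QOp n := fun x y =>
  ∏ v : Fin n, if x v = y v then (Real.cos β : ℂ) else -Complex.I * Real.sin β

/-- The depth-`p` QAOA unitary `U = Π_{j=1}^p e^{-iβ_j B} e^{-iγ_j C}`. -/
noncomputable def qaoaU {n k : ℕ} (G : KHypergraph n k)
    (f : (Fin k → Bool) → ℝ) (p : ℕ) (β γ : Fin p → ℝ) : QOp n :=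
  ((List.finRange p).map fun j => mixerLayer n (β j) * phaseLayer G f (γ j)).prod

/-- The uniform superposition `|+⟩^{⊗n}`. -/
noncomputable def plusState (n : ℕ) : Cfg n → ℂ :=
  fun _ => ((Real.sqrt (2 ^ n))⁻¹ : ℝ)

/-- The probability that measuring the QAOA state in the computational basis
yields the configuration `x`. -/
noncomputable def qaoaProb {n k : ℕ} (G : KHypergraph n k)
    (f : (Fin k → Bool) → ℝ) (p : ℕ) (β γ : Fin p → ℝ) (x : Cfg n) : ℝ :=
  ‖(qaoaU G f p β γ).mulVec (plusState n) x‖ ^ 2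

open Classical in
/-- The probability that the QAOA measurement outcome lies in the event `E`. -/
noncomputable def qaoaProbOf {n k : ℕ} (G : KHypergraph n k)
    (f : (Fin k → Bool) → ℝ) (p : ℕ) (β γ : Fin p → ℝ) (E : Set (Cfg n)) : ℝ :=
  ∑ x ∈ Finset.univ.filter (· ∈ E), qaoaProb G f p β γ x


/-! ### Auxiliary development -/

namespace QaoaAux

open Matrix

variable {n k : ℕ}

/-! #### Ball lemmas -/

lemma ball_zero (G : KHypergraph n k) (L : Finset (Fin n)) : ball G L 0 = L := rfl

open Classical in
lemma ball_succ (G : KHypergraph n k) (L : Finset (Fin n)) (p : ℕ) :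
    ball G L (p + 1) =
      ball G L p ∪ Finset.univ.filter (fun v => ∃ u ∈ ball G L p, HAdj G u v) := by
  rw [ball]

lemma subset_ball_succ (G : KHypergraph n k) (L : Finset (Fin n)) (p : ℕ) :
    ball G L p ⊆ ball G L (p + 1) := by
  rw [ball_succ]; exact Finset.subset_union_left

lemma hadj_mem_ball_succ {G : KHypergraph n k} {L : Finset (Fin n)} {p : ℕ} {u v : Fin n}
    (hu : u ∈ ball G L p) (h : HAdj G u v) : v ∈ ball G L (p + 1) := by
  classical
  rw [ball_succ]
  exact Finset.mem_union_right _ (by simpa using ⟨u, hu, h⟩)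

lemma ball_mono_radius (G : KHypergraph n k) (L : Finset (Fin n)) {a b : ℕ} (h : a ≤ b) :
    ball G L a ⊆ ball G L b := by
  induction b with
  | zero => simpa [Nat.le_zero.mp h] using Finset.Subset.refl _
  | succ b ih =>
      rcases Nat.lt_or_ge a (b+1) with hlt | hge
      · exact (ih (Nat.lt_succ_iff.mp hlt)).trans (subset_ball_succ G L b)
      · have : a = b + 1 := le_antisymm h hge
        subst this; exact Finset.Subset.refl _

lemma ball_mono_set (G : KHypergraph n k) {L L' : Finset (Fin n)} (h : L ⊆ L') (r : ℕ) :
    ball G L r ⊆ ball G L' r := by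
  classical
  induction r with
  | zero => exact h
  | succ r ih =>
      rw [ball_succ, ball_succ]
      intro w hw
      rcases Finset.mem_union.mp hw with hw | hw
      · exact Finset.mem_union_left _ (ih hw)
      · obtain ⟨u, hu, ha⟩ := by simpa using hw
        exact Finset.mem_union_right _ (by simpa using ⟨u, ih hu, ha⟩)

lemma ball_ball (G : KHypergraph n k) (L : Finset (Fin n)) (a : ℕ) :
    ∀ c, ball G (ball G L a) c = ball G L (a + c) := by
  intro c
  induction c with
  | zero => rfl
  | succ c ih => rw [ball_succ, ih, Nat.add_succ, ball_succ]

lemma hadj_symm {G : KHypergraph n k} {u v : Fin n} (h : HAdj G u v) : HAdj G v u := by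
  obtain ⟨e, he, h1, h2⟩ := h; exact ⟨e, he, h2, h1⟩

lemma mem_ball_exists {G : KHypergraph n k} {L : Finset (Fin n)} {r : ℕ} {w : Fin n}
    (hw : w ∈ ball G L r) : ∃ u ∈ L, w ∈ ball G ({u} : Finset (Fin n)) r := by
  classical
  induction r generalizing w with
  | zero => exact ⟨w, hw, by simp [ball_zero]⟩
  | succ r ih =>
      rw [ball_succ] at hw
      rcases Finset.mem_union.mp hw with hw | hw
      · obtain ⟨u, hu, hmem⟩ := ih hw
        exact ⟨u, hu, subset_ball_succ _ _ _ hmem⟩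
      · obtain ⟨u', hu', ha⟩ := by simpa using hw
        obtain ⟨u, hu, hmem⟩ := ih hu'
        exact ⟨u, hu, hadj_mem_ball_succ hmem ha⟩

lemma mem_ball_singleton_comm {G : KHypergraph n k} {r : ℕ} {u w : Fin n}
    (h : w ∈ ball G ({u} : Finset (Fin n)) r) : u ∈ ball G ({w} : Finset (Fin n)) r := by
  classical
  induction r generalizing u w with
  | zero =>
      rw [ball_zero] at h ⊢
      simp only [Finset.mem_singleton] at h ⊢
      exact h.symm
  | succ r ih =>
      rw [ball_succ] at h
      rcases Finset.mem_union.mp h with h | h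
      · exact subset_ball_succ _ _ _ (ih h)
      · obtain ⟨u', hu', ha⟩ := by simpa using h
        have h1 : u ∈ ball G ({u'} : Finset (Fin n)) r := ih hu'
        have h2 : u' ∈ ball G ({w} : Finset (Fin n)) 1 := by
          refine hadj_mem_ball_succ ?_ (hadj_symm ha)
          simp [ball_zero]
        have h3 : ({u'} : Finset (Fin n)) ⊆ ball G ({w} : Finset (Fin n)) 1 := by
          simpa using h2
        have := ball_mono_set G h3 r h1
        rw [ball_ball] at this
        simpa [Nat.add_comm] using this

lemma ball_far_disjoint (G : KHypergraph n k) (v : Fin n) (p : ℕ) :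
    Disjoint (ball G ({v} : Finset (Fin n)) p)
      (ball G ((ball G ({v} : Finset (Fin n)) (2 * p))ᶜ) p) := by
  classical
  rw [Finset.disjoint_left]
  intro w hw1 hw2
  obtain ⟨u, hu, hwu⟩ := mem_ball_exists hw2
  rw [Finset.mem_compl] at hu
  apply hu
  have h1 : u ∈ ball G ({w} : Finset (Fin n)) p := mem_ball_singleton_comm hwu
  have h2 : ({w} : Finset (Fin n)) ⊆ ball G ({v} : Finset (Fin n)) p := by simpa using hw1
  have := ball_mono_set G h2 p h1
  rw [ball_ball] at this
  simpa [two_mul] using this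

/-! #### Supported operators -/

/-- `A` acts only on the qubits in `S`. -/
structure SupportedOn (S : Finset (Fin n)) (A : QOp n) : Prop where
  vanish : ∀ x y : Cfg n, A x y ≠ 0 → ∀ v ∉ S, x v = y v
  localize : ∀ x y x' y' : Cfg n, (∀ v ∈ S, x v = x' v) → (∀ v ∈ S, y v = y' v) →
    (∀ v ∉ S, x v = y v) → (∀ v ∉ S, x' v = y' v) → A x y = A x' y'

/-- Pointwise xor of configurations. -/
def xorC (x d : Cfg n) : Cfg n := fun v => xor (x v) (d v)

@[simp] lemma xorC_xorC (x d : Cfg n) : xorC (xorC x d) d = x := by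
  funext v; simp [xorC, Bool.xor_assoc]

lemma xorC_apply (x d : Cfg n) (v : Fin n) : xorC x d v = xor (x v) (d v) := rfl

lemma xorC_involutive (d : Cfg n) : Function.Involutive (fun x : Cfg n => xorC x d) :=
  fun x => xorC_xorC x d

lemma xor_eq_xor_iff (a b c : Bool) : (xor a c = xor b c) ↔ a = b := by
  cases a <;> cases b <;> cases c <;> simp

lemma SupportedOn.transport {S : Finset (Fin n)} {A : QOp n} (h : SupportedOn S A)
    {x y x' y' : Cfg n} (hx : ∀ v ∈ S, x v = x' v) (hy : ∀ v ∈ S, y v = y' v)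
    (hiff : ∀ v ∉ S, (x v = y v ↔ x' v = y' v)) : A x y = A x' y' := by
  by_cases hxy : ∀ v ∉ S, x v = y v
  · exact h.localize x y x' y' hx hy hxy (fun v hv => (hiff v hv).mp (hxy v hv))
  · have hxy' : ¬ ∀ v ∉ S, x' v = y' v := by
      intro hc; exact hxy (fun v hv => (hiff v hv).mpr (hc v hv))
    have h1 : A x y = 0 := by
      by_contra hc; exact hxy (h.vanish x y hc)
    have h2 : A x' y' = 0 := by
      by_contra hc; exact hxy' (h.vanish x' y' hc)
    rw [h1, h2]

lemma SupportedOn.xor_eq {S : Finset (Fin n)} {A : QOp n} (h : SupportedOn S A)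
    (x y d : Cfg n) (hd : ∀ v ∈ S, d v = false) :
    A (xorC x d) (xorC y d) = A x y := by
  refine h.transport (fun v hv => by simp [xorC, hd v hv])
    (fun v hv => by simp [xorC, hd v hv]) (fun v _ => ?_)
  exact xor_eq_xor_iff (x v) (y v) (d v)

lemma SupportedOn.mono {S T : Finset (Fin n)} {A : QOp n} (hST : S ⊆ T)
    (h : SupportedOn S A) : SupportedOn T A := by
  constructor
  · intro x y hne v hv
    exact h.vanish x y hne v (fun hc => hv (hST hc))
  · intro x y x' y' hx hy hxy hx'y'
    refine h.transport (fun v hv => hx v (hST hv)) (fun v hv => hy v (hST hv))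
      (fun v hv => ?_)
    by_cases hvT : v ∈ T
    · rw [hx v hvT, hy v hvT]
    · simp [hxy v hvT, hx'y' v hvT]

lemma SupportedOn.mul {S : Finset (Fin n)} {A B : QOp n}
    (hA : SupportedOn S A) (hB : SupportedOn S B) : SupportedOn S (A * B) := by
  constructor
  · intro x y hne v hv
    rw [Matrix.mul_apply] at hne
    obtain ⟨z, hz⟩ := Finset.exists_ne_zero_of_sum_ne_zero hne
    have h1 := hA.vanish x z (left_ne_zero_of_mul hz.2) v hv
    have h2 := hB.vanish z y (right_ne_zero_of_mul hz.2) v hv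
    rw [h1, h2]
  · intro x y x' y' hx hy hxy hx'y'
    rw [Matrix.mul_apply, Matrix.mul_apply]
    set d : Cfg n := fun v => xor (x v) (x' v) with hd
    have hdS : ∀ v ∈ S, d v = false := fun v hv => by simp [hd, hx v hv]
    have hx'd : ∀ v, x' v = xor (x v) (d v) := fun v => by
      simp [hd, Bool.xor_assoc]
    have hy'd : ∀ v ∉ S, y' v = xor (y v) (d v) := fun v hv => by
      rw [← hx'y' v hv, hx'd v, hxy v hv]
    refine Fintype.sum_bijective (fun z : Cfg n => xorC z d)
      (xorC_involutive d).bijective _ _ (fun z => ?_)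
    have e1 : A x z = A x' (xorC z d) := by
      refine hA.transport hx (fun v hv => by simp [xorC, hdS v hv]) (fun v hv => ?_)
      rw [hx'd v, xorC_apply]
      exact (xor_eq_xor_iff (x v) (z v) (d v)).symm
    have e2 : B z y = B (xorC z d) y' := by
      refine hB.transport (fun v hv => by simp [xorC, hdS v hv]) hy (fun v hv => ?_)
      rw [hy'd v hv, xorC_apply]
      exact (xor_eq_xor_iff (z v) (y v) (d v)).symm
    rw [e1, e2]

/-! #### The mixing layer -/

noncomputable def msq (b : ℝ) (a c : Bool) : ℂ :=
  if a = c then (Real.cos b : ℂ) else -Complex.I * Real.sin b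

lemma mixerLayer_apply (b : ℝ) (x y : Cfg n) :
    mixerLayer n b x y = ∏ v : Fin n, msq b (x v) (y v) := rfl

lemma msq_xor (b : ℝ) (a c e : Bool) : msq b (xor a e) (xor c e) = msq b a c := by
  cases a <;> cases c <;> cases e <;> simp [msq]

lemma msq_flip_mul (b : ℝ) {a c : Bool} (hac : a ≠ c) (z : Bool) :
    (starRingEnd ℂ) (msq b (!z) a) * msq b (!z) c
      = -((starRingEnd ℂ) (msq b z a) * msq b z c) := by
  cases z <;> cases a <;> cases c <;>
    simp_all [msq, Complex.ext_iff] <;> ring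

lemma msq_orth (b : ℝ) (a c : Bool) :
    ∑ z : Bool, (starRingEnd ℂ) (msq b z a) * msq b z c = if a = c then 1 else 0 := by
  have hsq : (Real.sin b : ℂ)^2 + (Real.cos b : ℂ)^2 = 1 := by
    exact_mod_cast congrArg (fun t : ℝ => (t : ℂ)) (Real.sin_sq_add_cos_sq b)
  cases a <;> cases c
  case false.false =>
    simp only [msq, Fintype.sum_bool, reduceIte, Bool.true_eq_false, Bool.false_eq_true,
      if_true, if_false, _root_.map_mul, _root_.map_neg, Complex.conj_I, Complex.conj_ofReal]
    ring_nf
    rw [Complex.I_sq]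
    linear_combination hsq
  case true.true =>
    simp only [msq, Fintype.sum_bool, reduceIte, Bool.true_eq_false, Bool.false_eq_true,
      if_true, if_false, _root_.map_mul, _root_.map_neg, Complex.conj_I, Complex.conj_ofReal]
    ring_nf
    rw [Complex.I_sq]
    linear_combination hsq
  case false.true =>
    simp only [msq, Fintype.sum_bool, reduceIte, Bool.true_eq_false, Bool.false_eq_true,
      if_true, if_false, _root_.map_mul, _root_.map_neg, Complex.conj_I, Complex.conj_ofReal]
    ring
  case true.false =>
    simp only [msq, Fintype.sum_bool, reduceIte, Bool.true_eq_false, Bool.false_eq_true,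
      if_true, if_false, _root_.map_mul, _root_.map_neg, Complex.conj_I, Complex.conj_ofReal]
    ring

def flipAt (v₀ : Fin n) (z : Cfg n) : Cfg n := Function.update z v₀ (!(z v₀))

lemma flipAt_involutive (v₀ : Fin n) : Function.Involutive (flipAt (n := n) v₀) := by
  intro z
  funext v
  by_cases h : v = v₀
  · subst h; simp [flipAt]
  · simp [flipAt, Function.update_of_ne h]

lemma flipAt_apply_ne {v₀ v : Fin n} (h : v ≠ v₀) (z : Cfg n) : flipAt v₀ z v = z v := by
  simp [flipAt, Function.update_of_ne h]

lemma flipAt_apply_self (v₀ : Fin n) (z : Cfg n) : flipAt v₀ z v₀ = !(z v₀) := by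
  simp [flipAt]

lemma sum_pair (F : Cfg n → Cfg n → ℂ) :
    ∑ z : Cfg n, ∑ w : Cfg n, F z w = ∑ q : Cfg n × Cfg n, F q.1 q.2 :=
  (Fintype.sum_prod_type' F).symm

lemma conj3_apply (M A : QOp n) (x y : Cfg n) :
    (Mᴴ * A * M) x y
      = ∑ z : Cfg n, ∑ w : Cfg n, (starRingEnd ℂ) (M z x) * A z w * M w y := by
  rw [Matrix.mul_apply, Finset.sum_comm]
  refine Finset.sum_congr rfl (fun z _ => ?_)
  rw [Matrix.mul_apply, Finset.sum_mul]
  refine Finset.sum_congr rfl (fun w _ => ?_)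
  rw [Matrix.conjTranspose_apply]
  rfl

lemma mixer_xor (b : ℝ) (z x d : Cfg n) :
    mixerLayer n b (xorC z d) (xorC x d) = mixerLayer n b z x := by
  rw [mixerLayer_apply, mixerLayer_apply]
  exact Finset.prod_congr rfl (fun v _ => msq_xor b (z v) (x v) (d v))

/-- Conjugating both arguments of `A` by a flip off the support leaves `A` unchanged. -/
lemma SupportedOn.flip_eq {S : Finset (Fin n)} {A : QOp n} (h : SupportedOn S A)
    {v₀ : Fin n} (hv₀ : v₀ ∉ S) (z w : Cfg n) :
    A (flipAt v₀ z) (flipAt v₀ w) = A z w := by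
  refine h.transport (fun v hv => ?_) (fun v hv => ?_) (fun v hv => ?_)
  · exact flipAt_apply_ne (fun hc => hv₀ (by rw [← hc]; exact hv)) z
  · exact flipAt_apply_ne (fun hc => hv₀ (by rw [← hc]; exact hv)) w
  · by_cases hvv : v = v₀
    · subst hvv
      rw [flipAt_apply_self, flipAt_apply_self]
      cases (z v) <;> cases (w v) <;> simp
    · rw [flipAt_apply_ne hvv, flipAt_apply_ne hvv]

/-- Conjugation by the mixing layer preserves support. -/
lemma SupportedOn.mixer_conj {S : Finset (Fin n)} {A : QOp n} (h : SupportedOn S A)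
    (b : ℝ) : SupportedOn S ((mixerLayer n b)ᴴ * A * mixerLayer n b) := by
  constructor
  · -- vanish, by a sign-flip cancellation
    intro x y hne v₀ hv₀
    by_contra hxy
    apply hne
    rw [conj3_apply, sum_pair (fun z w =>
      (starRingEnd ℂ) (mixerLayer n b z x) * A z w * mixerLayer n b w y)]
    set F : Cfg n × Cfg n → ℂ :=
      fun q => (starRingEnd ℂ) (mixerLayer n b q.1 x) * A q.1 q.2 * mixerLayer n b q.2 y
      with hF
    have key : ∀ q : Cfg n × Cfg n, F (flipAt v₀ q.1, flipAt v₀ q.2) = -F q := by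
      rintro ⟨z, w⟩
      by_cases hzw : z v₀ = w v₀
      · have hA : A (flipAt v₀ z) (flipAt v₀ w) = A z w := h.flip_eq hv₀ z w
        simp only [hF]
        rw [hA, mixerLayer_apply, mixerLayer_apply, mixerLayer_apply, mixerLayer_apply,
          map_prod, map_prod]
        rw [← Finset.mul_prod_erase Finset.univ
            (fun v => (starRingEnd ℂ) (msq b (flipAt v₀ z v) (x v))) (Finset.mem_univ v₀),
          ← Finset.mul_prod_erase Finset.univ
            (fun v => msq b (flipAt v₀ w v) (y v)) (Finset.mem_univ v₀),
          ← Finset.mul_prod_erase Finset.univ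
            (fun v => (starRingEnd ℂ) (msq b (z v) (x v))) (Finset.mem_univ v₀),
          ← Finset.mul_prod_erase Finset.univ
            (fun v => msq b (w v) (y v)) (Finset.mem_univ v₀)]
        have hz' : ∀ v ∈ Finset.univ.erase v₀,
            (starRingEnd ℂ) (msq b (flipAt v₀ z v) (x v)) = (starRingEnd ℂ) (msq b (z v) (x v)) := by
          intro v hv
          rw [flipAt_apply_ne (Finset.mem_erase.mp hv).1]
        have hw' : ∀ v ∈ Finset.univ.erase v₀,
            msq b (flipAt v₀ w v) (y v) = msq b (w v) (y v) := by
          intro v hv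
          rw [flipAt_apply_ne (Finset.mem_erase.mp hv).1]
        rw [Finset.prod_congr rfl hz', Finset.prod_congr rfl hw',
          flipAt_apply_self, flipAt_apply_self, ← hzw]
        have := msq_flip_mul b hxy (z v₀)
        set P := ∏ v ∈ Finset.univ.erase v₀, (starRingEnd ℂ) (msq b (z v) (x v))
        set Q := ∏ v ∈ Finset.univ.erase v₀, msq b (w v) (y v)
        calc (starRingEnd ℂ) (msq b (!z v₀) (x v₀)) * P * A z w * (msq b (!z v₀) (y v₀) * Q)
            = ((starRingEnd ℂ) (msq b (!z v₀) (x v₀)) * msq b (!z v₀) (y v₀)) * (P * A z w * Q) := by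
              ring
          _ = -(((starRingEnd ℂ) (msq b (z v₀) (x v₀)) * msq b (z v₀) (y v₀)) * (P * A z w * Q)) := by
              rw [this]; ring
          _ = -((starRingEnd ℂ) (msq b (z v₀) (x v₀)) * P * A z w * (msq b (z v₀) (y v₀) * Q)) := by
              ring
      · have h1 : A z w = 0 := by
          by_contra hc
          exact hzw (h.vanish z w hc v₀ hv₀)
        have h2 : A (flipAt v₀ z) (flipAt v₀ w) = 0 := by
          by_contra hc
          have := h.vanish _ _ hc v₀ hv₀
          rw [flipAt_apply_self, flipAt_apply_self] at this
          exact hzw (by cases (z v₀) <;> cases (w v₀) <;> simp_all)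
        simp [hF, h1, h2]
    have hσ : Function.Involutive
        (fun q : Cfg n × Cfg n => (flipAt v₀ q.1, flipAt v₀ q.2)) := by
      rintro ⟨z, w⟩
      simp [flipAt_involutive v₀ z, flipAt_involutive v₀ w]
    have e : ∑ q : Cfg n × Cfg n, F (flipAt v₀ q.1, flipAt v₀ q.2)
        = ∑ q : Cfg n × Cfg n, F q :=
      Fintype.sum_bijective _ hσ.bijective _ F (fun q => rfl)
    have e2 : ∑ q : Cfg n × Cfg n, F q = -∑ q : Cfg n × Cfg n, F q := by
      conv_lhs => rw [← e]
      rw [Finset.sum_congr rfl (fun q _ => key q), Finset.sum_neg_distrib]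
    have := add_self_eq_zero.mp (by linear_combination e2)
    exact this
  · -- locality
    intro x y x' y' hx hy hxy hx'y'
    rw [conj3_apply, conj3_apply,
      sum_pair (fun z w => (starRingEnd ℂ) (mixerLayer n b z x) * A z w * mixerLayer n b w y),
      sum_pair (fun z w => (starRingEnd ℂ) (mixerLayer n b z x') * A z w * mixerLayer n b w y')]
    set d : Cfg n := fun v => xor (x v) (x' v) with hd
    have hdS : ∀ v ∈ S, d v = false := fun v hv => by simp [hd, hx v hv]
    have hx'd : x' = xorC x d := by
      funext v; simp [xorC, hd, Bool.xor_assoc]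
    have hy'd : y' = xorC y d := by
      funext v
      by_cases hv : v ∈ S
      · simp [xorC, ← hy v hv, hdS v hv]
      · rw [xorC_apply, ← hx'y' v hv, hx'd, xorC_apply, hxy v hv]
    refine Fintype.sum_bijective
      (fun q : Cfg n × Cfg n => (xorC q.1 d, xorC q.2 d)) ?_ _ _ (fun q => ?_)
    · exact Function.Involutive.bijective (fun q => by simp)
    · rcases q with ⟨z, w⟩
      have eA : A (xorC z d) (xorC w d) = A z w := h.xor_eq z w d hdS
      have eM1 : mixerLayer n b (xorC z d) x' = mixerLayer n b z x := by
        rw [hx'd, mixer_xor]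
      have eM2 : mixerLayer n b (xorC w d) y' = mixerLayer n b w y := by
        rw [hy'd, mixer_xor]
      simp only []
      rw [eA, eM1, eM2]

/-- The mixing layer is unitary. -/
lemma mixer_unitary (b : ℝ) : (mixerLayer n b)ᴴ * mixerLayer n b = 1 := by
  classical
  ext x y
  rw [Matrix.mul_apply]
  have e1 : ∀ z : Cfg n, (mixerLayer n b)ᴴ x z * mixerLayer n b z y
      = ∏ v : Fin n, (starRingEnd ℂ) (msq b (z v) (x v)) * msq b (z v) (y v) := by
    intro z
    rw [Matrix.conjTranspose_apply, mixerLayer_apply, mixerLayer_apply]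
    rw [show (star (∏ v : Fin n, msq b (z v) (x v)) : ℂ)
        = (starRingEnd ℂ) (∏ v : Fin n, msq b (z v) (x v)) from rfl]
    rw [map_prod, ← Finset.prod_mul_distrib]
  rw [Finset.sum_congr rfl (fun z _ => e1 z)]
  have e2 : ∑ z : Cfg n, ∏ v : Fin n, (starRingEnd ℂ) (msq b (z v) (x v)) * msq b (z v) (y v)
      = ∏ v : Fin n, ∑ c : Bool, (starRingEnd ℂ) (msq b c (x v)) * msq b c (y v) := by
    rw [Finset.prod_univ_sum, Fintype.piFinset_univ]
  rw [e2, Finset.prod_congr rfl (fun v _ => msq_orth b (x v) (y v))]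
  by_cases hxy : x = y
  · subst hxy; simp [Matrix.one_apply]
  · obtain ⟨v₀, hv₀⟩ := Function.ne_iff.mp hxy
    rw [Matrix.one_apply_ne hxy]
    exact Finset.prod_eq_zero (Finset.mem_univ v₀) (if_neg hv₀)

/-! #### The phase layer -/

/-- An edge meets a vertex set. -/
def meets (S : Finset (Fin n)) (e : Fin k → Fin n) : Prop := ∃ i, e i ∈ S

instance (S : Finset (Fin n)) : DecidablePred (meets (k := k) S) := fun _ => by
  unfold meets; infer_instance

noncomputable def pv (G : KHypergraph n k) (f : (Fin k → Bool) → ℝ) (g : ℝ) (x : Cfg n) : ℂ :=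
  Complex.exp (-(Complex.I * g * costEnergy G f x))

lemma phaseLayer_eq (G : KHypergraph n k) (f : (Fin k → Bool) → ℝ) (g : ℝ) :
    phaseLayer G f g = Matrix.diagonal (pv G f g) := rfl

lemma phase_conj_apply (G : KHypergraph n k) (f : (Fin k → Bool) → ℝ) (g : ℝ)
    (A : QOp n) (x y : Cfg n) :
    ((phaseLayer G f g)ᴴ * A * phaseLayer G f g) x y
      = (starRingEnd ℂ) (pv G f g x) * A x y * pv G f g y := by
  rw [phaseLayer_eq, Matrix.diagonal_conjTranspose, Matrix.mul_diagonal, Matrix.diagonal_mul]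
  rfl

/-- The part of the cost coming from edges meeting `S`. -/
noncomputable def mcost (G : KHypergraph n k) (f : (Fin k → Bool) → ℝ)
    (S : Finset (Fin n)) (x : Cfg n) : ℝ :=
  ((G.filter (meets S)).map (fun e => f (fun i => x (e i)))).sum

noncomputable def rcost (G : KHypergraph n k) (f : (Fin k → Bool) → ℝ)
    (S : Finset (Fin n)) (x : Cfg n) : ℝ :=
  ((G.filter (fun e => ¬ meets S e)).map (fun e => f (fun i => x (e i)))).sum

lemma cost_split (G : KHypergraph n k) (f : (Fin k → Bool) → ℝ)
    (S : Finset (Fin n)) (x : Cfg n) :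
    costEnergy G f x = mcost G f S x + rcost G f S x := by
  unfold costEnergy mcost rcost
  conv_lhs => rw [← Multiset.filter_add_not (meets S) G]
  rw [Multiset.map_add, Multiset.sum_add]

lemma rcost_congr {G : KHypergraph n k} {f : (Fin k → Bool) → ℝ} {S : Finset (Fin n)}
    {x y : Cfg n} (hxy : ∀ v ∉ S, x v = y v) : rcost G f S x = rcost G f S y := by
  unfold rcost
  congr 1
  refine Multiset.map_congr rfl (fun e he => ?_)
  have hm := (Multiset.mem_filter.mp he).2
  congr 1
  funext i
  exact hxy (e i) (fun hc => hm ⟨i, hc⟩)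

lemma mcost_congr {G : KHypergraph n k} {f : (Fin k → Bool) → ℝ} {S B : Finset (Fin n)}
    {x x' : Cfg n} (hB : ∀ v ∈ B, x v = x' v)
    (hGB : ∀ e ∈ G, meets S e → ∀ i, e i ∈ B) : mcost G f S x = mcost G f S x' := by
  unfold mcost
  congr 1
  refine Multiset.map_congr rfl (fun e he => ?_)
  have hm := Multiset.mem_filter.mp he
  congr 1
  funext i
  exact hB (e i) (hGB e hm.1 hm.2 i)

lemma conj_pv_mul (G : KHypergraph n k) (f : (Fin k → Bool) → ℝ) (g : ℝ)
    (S : Finset (Fin n)) {x y : Cfg n} (hxy : ∀ v ∉ S, x v = y v) :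
    (starRingEnd ℂ) (pv G f g x) * pv G f g y
      = Complex.exp (Complex.I * g * ((mcost G f S x - mcost G f S y : ℝ) : ℂ)) := by
  unfold pv
  rw [← Complex.exp_conj, ← Complex.exp_add]
  congr 1
  rw [_root_.map_neg, _root_.map_mul, _root_.map_mul, Complex.conj_I, Complex.conj_ofReal,
    Complex.conj_ofReal]
  rw [cost_split G f S x, cost_split G f S y, rcost_congr hxy]
  push_cast
  ring

lemma subset_ball (G : KHypergraph n k) (S : Finset (Fin n)) (r : ℕ) : S ⊆ ball G S r :=
  ball_mono_radius G S (Nat.zero_le r)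

lemma edge_mem_ball_one {G : KHypergraph n k} {S : Finset (Fin n)} {e : Fin k → Fin n}
    (he : e ∈ G) (hm : meets S e) (i : Fin k) : e i ∈ ball G S 1 := by
  obtain ⟨i₀, hi₀⟩ := hm
  exact hadj_mem_ball_succ (p := 0) hi₀ ⟨e, he, ⟨i₀, rfl⟩, ⟨i, rfl⟩⟩

/-- Conjugation by the phase layer grows the support by one step. -/
lemma phase_conj_supported {G : KHypergraph n k} {f : (Fin k → Bool) → ℝ} {g : ℝ}
    {S : Finset (Fin n)} {A : QOp n} (h : SupportedOn S A) :
    SupportedOn (ball G S 1) ((phaseLayer G f g)ᴴ * A * phaseLayer G f g) := by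
  have hSB : S ⊆ ball G S 1 := subset_ball G S 1
  constructor
  · intro x y hne v hv
    have hA : A x y ≠ 0 := by
      intro hc
      apply hne
      rw [phase_conj_apply, hc, mul_zero, zero_mul]
    exact h.vanish x y hA v (fun hc => hv (hSB hc))
  · intro x y x' y' hx hy hxy hx'y'
    rw [phase_conj_apply, phase_conj_apply]
    by_cases hS : ∀ v ∉ S, x v = y v
    · have hS' : ∀ v ∉ S, x' v = y' v := by
        intro v hv
        by_cases hvB : v ∈ ball G S 1
        · rw [← hx v hvB, ← hy v hvB]; exact hS v hv
        · exact hx'y' v hvB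
      have hA : A x y = A x' y' :=
        h.localize x y x' y' (fun v hv => hx v (hSB hv)) (fun v hv => hy v (hSB hv)) hS hS'
      have hre : ∀ a b c : ℂ, a * b * c = b * (a * c) := fun a b c => by ring
      rw [hre, hre, hA, conj_pv_mul G f g S hS, conj_pv_mul G f g S hS']
      have hmx : mcost G f S x = mcost G f S x' :=
        mcost_congr hx (fun e he hm i => edge_mem_ball_one he hm i)
      have hmy : mcost G f S y = mcost G f S y' :=
        mcost_congr hy (fun e he hm i => edge_mem_ball_one he hm i)
      rw [hmx, hmy]
    · have hS' : ¬ ∀ v ∉ S, x' v = y' v := by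
        intro hc
        apply hS
        intro v hv
        by_cases hvB : v ∈ ball G S 1
        · rw [hx v hvB, hy v hvB]; exact hc v hv
        · exact hxy v hvB
      have h1 : A x y = 0 := by
        by_contra hc; exact hS (h.vanish x y hc)
      have h2 : A x' y' = 0 := by
        by_contra hc; exact hS' (h.vanish x' y' hc)
      rw [h1, h2, mul_zero, zero_mul, mul_zero, zero_mul]

/-- The conjugated phase layer only depends on the edges meeting the support. -/
lemma phase_conj_congr {G G' : KHypergraph n k} {f : (Fin k → Bool) → ℝ}
    {S : Finset (Fin n)} {A : QOp n} (h : SupportedOn S A)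
    (hGG' : Multiset.filter (meets S) G = Multiset.filter (meets S) G') (g : ℝ) :
    (phaseLayer G f g)ᴴ * A * phaseLayer G f g
      = (phaseLayer G' f g)ᴴ * A * phaseLayer G' f g := by
  have hm : ∀ z : Cfg n, mcost G f S z = mcost G' f S z := fun z => by
    unfold mcost; rw [hGG']
  ext x y
  rw [phase_conj_apply, phase_conj_apply]
  by_cases hA : A x y = 0
  · rw [hA, mul_zero, zero_mul, mul_zero, zero_mul]
  · have hS := h.vanish x y hA
    have hre : ∀ a b c : ℂ, a * b * c = b * (a * c) := fun a b c => by ring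
    rw [hre, hre, conj_pv_mul G f g S hS, conj_pv_mul G' f g S hS, hm x, hm y]

/-! #### Layers of the QAOA circuit -/

noncomputable def layersList (G : KHypergraph n k) (f : (Fin k → Bool) → ℝ) :
    List (ℝ × ℝ) → QOp n
  | [] => 1
  | bg :: t => (mixerLayer n bg.1 * phaseLayer G f bg.2) * layersList G f t

/-- Heisenberg conjugation. -/
noncomputable def heis (U A : QOp n) : QOp n := Uᴴ * A * U

lemma heis_one (A : QOp n) : heis 1 A = A := by
  simp [heis]

lemma heis_cons (G : KHypergraph n k) (f : (Fin k → Bool) → ℝ) (bg : ℝ × ℝ)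
    (t : List (ℝ × ℝ)) (A : QOp n) :
    heis (layersList G f (bg :: t)) A
      = heis (layersList G f t)
          (heis (phaseLayer G f bg.2) (heis (mixerLayer n bg.1) A)) := by
  simp only [heis, layersList, Matrix.conjTranspose_mul, Matrix.mul_assoc]

lemma qaoaU_eq_layersList (G : KHypergraph n k) (f : (Fin k → Bool) → ℝ) (p : ℕ)
    (β γ : Fin p → ℝ) :
    qaoaU G f p β γ = layersList G f ((List.finRange p).map fun j => (β j, γ j)) := by
  unfold qaoaU
  generalize List.finRange p = l
  induction l with
  | nil => rfl
  | cons j t ih => simp [layersList, List.map_cons, List.prod_cons, ih]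

lemma heis_layers_supported (G : KHypergraph n k) (f : (Fin k → Bool) → ℝ)
    (l : List (ℝ × ℝ)) :
    ∀ (S : Finset (Fin n)) (A : QOp n), SupportedOn S A →
      SupportedOn (ball G S l.length) (heis (layersList G f l) A) := by
  induction l with
  | nil =>
      intro S A h
      have e : heis (layersList G f ([] : List (ℝ × ℝ))) A = A := by
        rw [show layersList G f ([] : List (ℝ × ℝ)) = 1 from rfl, heis_one]
      rw [List.length_nil, ball_zero, e]
      exact h
  | cons bg t ih =>
      intro S A h
      rw [heis_cons]
      have h1 : SupportedOn S (heis (mixerLayer n bg.1) A) := h.mixer_conj bg.1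
      have h2 : SupportedOn (ball G S 1)
          (heis (phaseLayer G f bg.2) (heis (mixerLayer n bg.1) A)) :=
        phase_conj_supported h1
      have h3 := ih (ball G S 1) _ h2
      rw [ball_ball] at h3
      rw [List.length_cons, Nat.add_comm]
      exact h3

lemma heis_layers_congr (G G' : KHypergraph n k) (f : (Fin k → Bool) → ℝ)
    (l : List (ℝ × ℝ)) :
    ∀ (S : Finset (Fin n)) (A : QOp n), SupportedOn S A →
      (∀ j, j ≤ l.length → ball G S j = ball G' S j) →
      (∀ j, j < l.length →
        Multiset.filter (meets (ball G S j)) G = Multiset.filter (meets (ball G S j)) G') →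
      heis (layersList G f l) A = heis (layersList G' f l) A := by
  induction l with
  | nil => intro S A _ _ _; rfl
  | cons bg t ih =>
      intro S A h hball hedge
      rw [heis_cons, heis_cons]
      have h1 : SupportedOn S (heis (mixerLayer n bg.1) A) := h.mixer_conj bg.1
      have e0 : heis (phaseLayer G f bg.2) (heis (mixerLayer n bg.1) A)
          = heis (phaseLayer G' f bg.2) (heis (mixerLayer n bg.1) A) := by
        have := phase_conj_congr (f := f) h1 (hedge 0 (Nat.succ_pos _)) bg.2
        simpa [heis] using this
      have hB2 : SupportedOn (ball G S 1)
          (heis (phaseLayer G f bg.2) (heis (mixerLayer n bg.1) A)) :=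
        phase_conj_supported h1
      have hb1 : ball G S 1 = ball G' S 1 := hball 1 (by simp)
      have step := ih (ball G S 1) _ hB2 ?_ ?_
      · rw [step, e0]
      · intro j hj
        rw [ball_ball, hb1, ball_ball]
        exact hball (1 + j) (by simpa [Nat.add_comm] using Nat.succ_le_succ hj)
      · intro j hj
        rw [ball_ball]
        exact hedge (1 + j) (by simpa [Nat.add_comm] using Nat.succ_lt_succ hj)

/-! #### Unitarity -/

lemma unitary_mul {A B : QOp n} (hA : Aᴴ * A = 1) (hB : Bᴴ * B = 1) :
    (A * B)ᴴ * (A * B) = 1 := by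
  rw [Matrix.conjTranspose_mul, Matrix.mul_assoc, ← Matrix.mul_assoc Aᴴ A B, hA,
    Matrix.one_mul, hB]

lemma phase_unitary (G : KHypergraph n k) (f : (Fin k → Bool) → ℝ) (g : ℝ) :
    (phaseLayer G f g)ᴴ * phaseLayer G f g = 1 := by
  have key : ∀ x : Cfg n, (starRingEnd ℂ) (pv G f g x) * pv G f g x = 1 := by
    intro x
    unfold pv
    rw [← Complex.exp_conj, ← Complex.exp_add]
    rw [show (starRingEnd ℂ) (-(Complex.I * g * costEnergy G f x))
        + -(Complex.I * g * costEnergy G f x) = 0 from by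
      rw [_root_.map_neg, _root_.map_mul, _root_.map_mul, Complex.conj_I, Complex.conj_ofReal,
        Complex.conj_ofReal]
      ring]
    exact Complex.exp_zero
  have harr : (fun i : Cfg n => star (pv G f g) i * pv G f g i) = (1 : Cfg n → ℂ) := by
    funext x
    simpa [Pi.star_apply] using key x
  rw [phaseLayer_eq, Matrix.diagonal_conjTranspose, Matrix.diagonal_mul_diagonal, harr]
  exact Matrix.diagonal_one

lemma layers_unitary (G : KHypergraph n k) (f : (Fin k → Bool) → ℝ) :
    ∀ l : List (ℝ × ℝ), (layersList G f l)ᴴ * layersList G f l = 1 := by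
  intro l
  induction l with
  | nil => simp [layersList]
  | cons bg t ih =>
      exact unitary_mul (unitary_mul (mixer_unitary bg.1) (phase_unitary G f bg.2)) ih

lemma heis_mul {U X Y : QOp n} (hUU : U * Uᴴ = 1) :
    heis U (X * Y) = heis U X * heis U Y := by
  unfold heis
  have e : U * (Uᴴ * (Y * U)) = Y * U := by
    rw [← Matrix.mul_assoc, hUU, Matrix.one_mul]
  simp only [Matrix.mul_assoc]
  rw [e]

/-! #### Expectation values and projectors -/

/-- Expectation value in the uniform superposition. -/
noncomputable def expVal (A : QOp n) : ℂ := (∑ x : Cfg n, ∑ y : Cfg n, A x y) / (2 ^ n : ℂ)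

open Classical in
/-- The diagonal projector onto an event. -/
noncomputable def projE (E : Set (Cfg n)) : QOp n :=
  Matrix.diagonal fun x => if x ∈ E then (1 : ℂ) else 0

open Classical in
lemma projE_apply (E : Set (Cfg n)) (x y : Cfg n) :
    projE E x y = if x = y then (if x ∈ E then (1 : ℂ) else 0) else 0 := by
  unfold projE
  by_cases h : x = y
  · subst h; simp [Matrix.diagonal_apply_eq]
  · simp [Matrix.diagonal_apply_ne _ h, h]

lemma projE_supported (S : Finset (Fin n)) (E : Set (Cfg n))
    (hE : ∀ x y : Cfg n, (∀ v ∈ S, x v = y v) → (x ∈ E ↔ y ∈ E)) :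
    SupportedOn S (projE E) := by
  constructor
  · intro x y hne v _
    by_cases h : x = y
    · rw [h]
    · rw [projE_apply, if_neg h] at hne
      exact absurd rfl hne
  · intro x y x' y' hx hy hxy hx'y'
    rw [projE_apply, projE_apply]
    by_cases h : x = y
    · have h' : x' = y' := by
        funext v
        by_cases hv : v ∈ S
        · rw [← hx v hv, ← hy v hv, h]
        · exact hx'y' v hv
      rw [if_pos h, if_pos h']
      have := hE x x' (fun v hv => hx v hv)
      by_cases hxE : x ∈ E
      · rw [if_pos hxE, if_pos (this.mp hxE)]
      · rw [if_neg hxE, if_neg (fun hc => hxE (this.mpr hc))]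
    · have h' : x' ≠ y' := by
        intro hc
        apply h
        funext v
        by_cases hv : v ∈ S
        · rw [hx v hv, hy v hv, hc]
        · exact hxy v hv
      rw [if_neg h, if_neg h']

open Classical in
lemma projE_mul (E₁ E₂ : Set (Cfg n)) : projE E₁ * projE E₂ = projE (E₁ ∩ E₂) := by
  unfold projE
  rw [Matrix.diagonal_mul_diagonal]
  refine congrArg Matrix.diagonal (funext fun x => ?_)
  by_cases h1 : x ∈ E₁ <;> by_cases h2 : x ∈ E₂ <;>
    simp [h1, h2, Set.mem_inter_iff]

/-- The fundamental identity: expectation of a conjugated projector is the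
outcome probability. -/
lemma expVal_heis_proj (G : KHypergraph n k) (f : (Fin k → Bool) → ℝ) (p : ℕ)
    (β γ : Fin p → ℝ) (E : Set (Cfg n)) :
    expVal (heis (qaoaU G f p β γ) (projE E)) = (qaoaProbOf G f p β γ E : ℂ) := by
  classical
  set U := qaoaU G f p β γ with hU
  set s : Cfg n → ℂ := fun w => ∑ y : Cfg n, U w y with hs
  set d : Cfg n → ℂ := fun w => if w ∈ E then (1 : ℂ) else 0 with hd
  have entry : ∀ x y : Cfg n, heis U (projE E) x y
      = ∑ w : Cfg n, (starRingEnd ℂ) (U w x) * (d w * U w y) := by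
    intro x y
    show (Uᴴ * projE E * U) x y = _
    rw [Matrix.mul_apply]
    refine Finset.sum_congr rfl (fun w _ => ?_)
    have : (Uᴴ * projE E) x w = Uᴴ x w * d w := Matrix.mul_diagonal _ _ _ _
    rw [this, Matrix.conjTranspose_apply, mul_assoc]
    rfl
  have hnum : ∑ x : Cfg n, ∑ y : Cfg n, heis U (projE E) x y
      = ∑ w : Cfg n, d w * ((starRingEnd ℂ) (s w) * s w) := by
    rw [Finset.sum_congr rfl (fun x _ => Finset.sum_congr rfl (fun y _ => entry x y))]
    rw [Finset.sum_congr rfl (fun x (_ : x ∈ Finset.univ) => Finset.sum_comm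
      (f := fun y w => (starRingEnd ℂ) (U w x) * (d w * U w y)))]
    rw [Finset.sum_comm]
    refine Finset.sum_congr rfl (fun w _ => ?_)
    have e1 : ∀ x : Cfg n, ∑ y : Cfg n, (starRingEnd ℂ) (U w x) * (d w * U w y)
        = (starRingEnd ℂ) (U w x) * (d w * s w) := by
      intro x
      rw [← Finset.mul_sum, ← Finset.mul_sum]
    rw [Finset.sum_congr rfl (fun x _ => e1 x), ← Finset.sum_mul]
    rw [← map_sum (starRingEnd ℂ) (fun x => U w x) Finset.univ]
    ring
  have hr : ((Real.sqrt (2 ^ n))⁻¹ : ℝ) * ((Real.sqrt (2 ^ n))⁻¹ : ℝ) = ((2 : ℝ) ^ n)⁻¹ := by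
    rw [← mul_inv]
    rw [Real.mul_self_sqrt (by positivity)]
  have hprob : qaoaProbOf G f p β γ E
      = ∑ w : Cfg n, (if w ∈ E then (1 : ℝ) else 0) * (Complex.normSq (s w) * ((2 : ℝ) ^ n)⁻¹) := by
    unfold qaoaProbOf
    rw [Finset.sum_filter]
    refine Finset.sum_congr rfl (fun w _ => ?_)
    have hmv : (qaoaU G f p β γ).mulVec (plusState n) w = s w * ((Real.sqrt (2 ^ n))⁻¹ : ℝ) := by
      show ∑ y : Cfg n, U w y * plusState n y = _
      unfold plusState
      rw [← Finset.sum_mul]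
    have hqp : qaoaProb G f p β γ w = Complex.normSq (s w) * ((2 : ℝ) ^ n)⁻¹ := by
      unfold qaoaProb
      rw [hmv, Complex.sq_norm, Complex.normSq_mul, Complex.normSq_ofReal, hr]
    by_cases hw : w ∈ E
    · rw [if_pos hw, if_pos hw, hqp, one_mul]
    · rw [if_neg hw, if_neg hw, zero_mul]
  have hcast : ∀ w : Cfg n, d w * ((starRingEnd ℂ) (s w) * s w) / (2 ^ n : ℂ)
      = (((if w ∈ E then (1 : ℝ) else 0) * (Complex.normSq (s w) * ((2 : ℝ) ^ n)⁻¹) : ℝ) : ℂ) := by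
    intro w
    have hconj : (starRingEnd ℂ) (s w) * s w = (Complex.normSq (s w) : ℂ) := by
      rw [mul_comm, Complex.mul_conj]
    rw [hconj]
    push_cast
    by_cases hw : w ∈ E
    · simp only [hd, if_pos hw]
      field_simp
      simp
    · simp only [hd, if_neg hw]
      simp
  rw [show expVal (heis U (projE E)) = (∑ x : Cfg n, ∑ y : Cfg n, heis U (projE E) x y) / (2 ^ n : ℂ)
    from rfl]
  rw [hnum, hprob, Finset.sum_div, Complex.ofReal_sum]
  exact Finset.sum_congr rfl (fun w _ => hcast w)

/-! #### Factorization over disjoint supports -/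

lemma bool_aux1 : ∀ a b c : Bool, xor (xor a b) (xor a c) = xor b c := by decide
lemma bool_aux2 : ∀ a b c : Bool, xor (xor a b) c = xor a (xor b c) := by decide
lemma bool_aux3 : ∀ a b : Bool, xor a (xor a b) = b := by decide

/-- The key combinatorial swap: a measure-preserving bijection on 4-tuples of
configurations matching `c, x, z, y ↦ x, z, z', y`. -/
noncomputable def swapEquiv (S : Finset (Fin n)) :
    (Cfg n × Cfg n × Cfg n × Cfg n) ≃ (Cfg n × Cfg n × Cfg n × Cfg n) := by
  classical
  refine
    { toFun := fun q =>
        (xorC q.2.1 (fun v => if v ∈ S then false else q.1 v),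
         xorC q.2.2.1 (fun v => if v ∈ S then false else q.1 v),
         xorC q.2.2.1 (fun v => if v ∈ S then q.1 v else false),
         xorC q.2.2.2 (fun v => if v ∈ S then q.1 v else false))
      invFun := fun q =>
        ((fun v => xor (q.2.1 v) (q.2.2.1 v)),
         xorC q.1 (fun v => if v ∈ S then false else xor (q.2.1 v) (q.2.2.1 v)),
         xorC q.2.1 (fun v => if v ∈ S then false else xor (q.2.1 v) (q.2.2.1 v)),
         xorC q.2.2.2 (fun v => if v ∈ S then xor (q.2.1 v) (q.2.2.1 v) else false))
      left_inv := ?_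
      right_inv := ?_ }
  · rintro ⟨c, x, z, y⟩
    refine Prod.ext ?_ (Prod.ext ?_ (Prod.ext ?_ ?_)) <;>
      funext v <;>
      simp only [xorC_apply] <;>
      by_cases hv : v ∈ S <;>
      simp only [hv, if_true, if_false, not_false_iff, if_neg, if_pos] <;>
      cases hcv : c v <;> cases hxv : x v <;> cases hzv : z v <;> cases hyv : y v <;>
      rfl
  · rintro ⟨X, Z, Z', Y⟩
    refine Prod.ext ?_ (Prod.ext ?_ (Prod.ext ?_ ?_)) <;>
      funext v <;>
      simp only [xorC_apply] <;>
      by_cases hv : v ∈ S <;>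
      simp only [hv, if_true, if_false, not_false_iff, if_neg, if_pos] <;>
      cases hXv : X v <;> cases hZv : Z v <;> cases hZ'v : Z' v <;> cases hYv : Y v <;>
      rfl

lemma expVal_mul_disjoint {S T : Finset (Fin n)} {A B : QOp n}
    (hA : SupportedOn S A) (hB : SupportedOn T B) (hST : Disjoint S T) :
    expVal (A * B) = expVal A * expVal B := by
  classical
  have h2n : ((2 : ℂ) ^ n) ≠ 0 := pow_ne_zero n two_ne_zero
  have card_eq : (Fintype.card (Cfg n) : ℂ) = (2 : ℂ) ^ n := by
    simp [Fintype.card_fun]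
  -- termwise invariance along the swap
  have hterm : ∀ q : Cfg n × Cfg n × Cfg n × Cfg n,
      A q.2.1 q.2.2.1 * B q.2.2.1 q.2.2.2
        = A ((swapEquiv S) q).1 ((swapEquiv S) q).2.1
          * B ((swapEquiv S) q).2.2.1 ((swapEquiv S) q).2.2.2 := by
    rintro ⟨c, x, z, y⟩
    have e1 : A (xorC x (fun v => if v ∈ S then false else c v))
        (xorC z (fun v => if v ∈ S then false else c v)) = A x z :=
      hA.xor_eq x z _ (fun v hv => if_pos hv)
    have e2 : B (xorC z (fun v => if v ∈ S then c v else false))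
        (xorC y (fun v => if v ∈ S then c v else false)) = B z y :=
      hB.xor_eq z y _ (fun v hv => if_neg (fun hc => (Finset.disjoint_left.mp hST) hc hv))
    show A x z * B z y = _
    rw [show ((swapEquiv S) (c, x, z, y)) =
      (xorC x (fun v => if v ∈ S then false else c v),
       xorC z (fun v => if v ∈ S then false else c v),
       xorC z (fun v => if v ∈ S then c v else false),
       xorC y (fun v => if v ∈ S then c v else false)) from rfl]
    rw [e1, e2]
  -- the two ways of summing
  have main : ∑ q : Cfg n × Cfg n × Cfg n × Cfg n, A q.2.1 q.2.2.1 * B q.2.2.1 q.2.2.2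
      = ∑ q : Cfg n × Cfg n × Cfg n × Cfg n, A q.1 q.2.1 * B q.2.2.1 q.2.2.2 :=
    Fintype.sum_equiv (swapEquiv S) _ _ (fun q => by rw [hterm q])
  have l1 : ∑ q : Cfg n × Cfg n × Cfg n × Cfg n, A q.2.1 q.2.2.1 * B q.2.2.1 q.2.2.2
      = (Fintype.card (Cfg n) : ℂ)
          * (∑ x : Cfg n, ∑ z : Cfg n, ∑ y : Cfg n, A x z * B z y) := by
    simp only [Fintype.sum_prod_type]
    rw [Finset.sum_const, Finset.card_univ, nsmul_eq_mul]
  have r1 : ∑ q : Cfg n × Cfg n × Cfg n × Cfg n, A q.1 q.2.1 * B q.2.2.1 q.2.2.2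
      = (∑ x : Cfg n, ∑ z : Cfg n, A x z) * (∑ z : Cfg n, ∑ y : Cfg n, B z y) := by
    simp only [Fintype.sum_prod_type]
    simp only [← Finset.mul_sum, ← Finset.sum_mul]
  have key : (2 : ℂ) ^ n * (∑ x : Cfg n, ∑ z : Cfg n, ∑ y : Cfg n, A x z * B z y)
      = (∑ x : Cfg n, ∑ z : Cfg n, A x z) * (∑ z : Cfg n, ∑ y : Cfg n, B z y) := by
    rw [← card_eq, ← l1, main, r1]
  have hAB : ∑ x : Cfg n, ∑ y : Cfg n, (A * B) x y
      = ∑ x : Cfg n, ∑ z : Cfg n, ∑ y : Cfg n, A x z * B z y := by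
    refine Finset.sum_congr rfl (fun x _ => ?_)
    rw [Finset.sum_congr rfl (fun y (_ : y ∈ Finset.univ) => Matrix.mul_apply)]
    exact Finset.sum_comm
  unfold expVal
  rw [hAB, div_mul_div_comm, ← key, mul_comm ((2:ℂ)^n) _, mul_div_mul_right _ _ h2n]

lemma meets_edge_in_ball {G : KHypergraph n k} {L : Finset (Fin n)} {j p : ℕ} (hjp : j < p)
    {e : Fin k → Fin n} (he : e ∈ G) (hm : meets (ball G L j) e) (i : Fin k) :
    e i ∈ ball G L p := by
  obtain ⟨i₀, hi₀⟩ := hm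
  exact ball_mono_radius G L (Nat.succ_le_of_lt hjp)
    (hadj_mem_ball_succ hi₀ ⟨e, he, ⟨i₀, rfl⟩, ⟨i, rfl⟩⟩)

end QaoaAux

/-- Depth-`p` QAOA is a generic `2p`-local algorithm: the joint distribution of
the measured output bits on a vertex set `L` depends only on the
`p`-neighborhood of `L`, and the output bit at `v` is independent of the joint
distribution of the output bits at all vertices farther than `2p` from `v`. -/
theorem qaoa_is_generic_2p_local {n k : ℕ} (f : (Fin k → Bool) → ℝ) (p : ℕ)
    (β γ : Fin p → ℝ) :
    (∀ (G G' : KHypergraph n k) (L : Finset (Fin n)),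
      ball G L p = ball G' L p →
      Multiset.filter (fun e => ∀ i, e i ∈ ball G L p) G
        = Multiset.filter (fun e => ∀ i, e i ∈ ball G' L p) G' →
      ∀ τ : (v : Fin n) → v ∈ L → Bool,
        qaoaProbOf G f p β γ {x | ∀ v (hv : v ∈ L), x v = τ v hv}
          = qaoaProbOf G' f p β γ {x | ∀ v (hv : v ∈ L), x v = τ v hv}) ∧
    (∀ (G : KHypergraph n k) (v : Fin n) (a : Bool)
        (b : (u : Fin n) → u ∉ ball G {v} (2 * p) → Bool),
      qaoaProbOf G f p β γ
          ({x | x v = a} ∩ {x | ∀ u (hu : u ∉ ball G {v} (2 * p)), x u = b u hu})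
        = qaoaProbOf G f p β γ {x | x v = a} *
            qaoaProbOf G f p β γ
              {x | ∀ u (hu : u ∉ ball G {v} (2 * p)), x u = b u hu}) := by
  classical
  open QaoaAux in
  constructor
  · -- locality of the joint distribution
    intro G G' L hb hf τ
    set E : Set (Cfg n) := {x | ∀ v (hv : v ∈ L), x v = τ v hv} with hE
    have hP : SupportedOn L (projE E) := by
      refine projE_supported L E (fun x y hxy => ?_)
      constructor
      · intro h v hv; rw [← hxy v hv]; exact h v hv
      · intro h v hv; rw [hxy v hv]; exact h v hv
    have H1 : ∀ j, j ≤ p → ball G L j = ball G' L j := by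
      intro j
      induction j with
      | zero => intro _; rfl
      | succ j ih =>
          intro hj
          have hBj := ih (Nat.le_of_succ_le hj)
          rw [ball_succ, ball_succ, hBj]
          congr 1
          refine Finset.filter_congr (fun w _ => ?_)
          constructor
          · rintro ⟨u, hu, e, he, ⟨i₀, hi₀⟩, hiw⟩
            have hu' : u ∈ ball G L j := by rw [hBj]; exact hu
            have hm : meets (ball G L j) e := ⟨i₀, by rw [hi₀]; exact hu'⟩
            have hmem : e ∈ Multiset.filter (fun e => ∀ i, e i ∈ ball G L p) G :=
              Multiset.mem_filter.mpr ⟨he, fun i => meets_edge_in_ball hj he hm i⟩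
            rw [hf] at hmem
            exact ⟨u, hu, e, (Multiset.mem_filter.mp hmem).1, ⟨i₀, hi₀⟩, hiw⟩
          · rintro ⟨u, hu, e, he, ⟨i₀, hi₀⟩, hiw⟩
            have hm : meets (ball G' L j) e := ⟨i₀, by rw [hi₀]; exact hu⟩
            have hmem : e ∈ Multiset.filter (fun e => ∀ i, e i ∈ ball G' L p) G' :=
              Multiset.mem_filter.mpr ⟨he, fun i => meets_edge_in_ball hj he hm i⟩
            rw [← hf] at hmem
            refine ⟨u, hu, e, (Multiset.mem_filter.mp hmem).1, ⟨i₀, hi₀⟩, hiw⟩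
    have H2 : ∀ j, j < p →
        Multiset.filter (meets (ball G L j)) G = Multiset.filter (meets (ball G L j)) G' := by
      intro j hj
      have hBj : ball G L j = ball G' L j := H1 j (le_of_lt hj)
      have s1 : Multiset.filter (meets (ball G L j)) G
          = Multiset.filter (meets (ball G L j))
              (Multiset.filter (fun e => ∀ i, e i ∈ ball G L p) G) := by
        rw [Multiset.filter_filter]
        exact Multiset.filter_congr (fun e he =>
          ⟨fun hm => ⟨hm, fun i => meets_edge_in_ball hj he hm i⟩, And.left⟩)
      have s2 : Multiset.filter (meets (ball G L j)) G'
          = Multiset.filter (meets (ball G L j))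
              (Multiset.filter (fun e => ∀ i, e i ∈ ball G' L p) G') := by
        rw [Multiset.filter_filter]
        refine Multiset.filter_congr (fun e he => ?_)
        refine ⟨fun hm => ⟨hm, fun i => ?_⟩, And.left⟩
        have hm' : meets (ball G' L j) e := by rw [← hBj]; exact hm
        exact meets_edge_in_ball hj he hm' i
      rw [s1, hf, ← s2]
    have hlen : ((List.finRange p).map fun j => (β j, γ j)).length = p := by
      simp
    have hcongr := heis_layers_congr G G' f ((List.finRange p).map fun j => (β j, γ j))
      L (projE E) hP (fun j hj => H1 j (by rwa [hlen] at hj))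
      (fun j hj => H2 j (by rwa [hlen] at hj))
    have e1 := expVal_heis_proj G f p β γ E
    have e2 := expVal_heis_proj G' f p β γ E
    have : (qaoaProbOf G f p β γ E : ℂ) = (qaoaProbOf G' f p β γ E : ℂ) := by
      rw [← e1, ← e2]
      unfold heis
      rw [qaoaU_eq_layersList G f p β γ, qaoaU_eq_layersList G' f p β γ]
      exact congrArg expVal hcongr
    exact_mod_cast this
  · -- independence of far-away outputs
    intro G v a b
    set E1 : Set (Cfg n) := {x | x v = a} with hE1
    set E2 : Set (Cfg n) := {x | ∀ u (hu : u ∉ ball G {v} (2 * p)), x u = b u hu} with hE2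
    have hP1 : SupportedOn ({v} : Finset (Fin n)) (projE E1) := by
      refine projE_supported _ E1 (fun x y hxy => ?_)
      have := hxy v (Finset.mem_singleton_self v)
      constructor
      · intro h; show y v = a; rw [← this]; exact h
      · intro h; show x v = a; rw [this]; exact h
    have hP2 : SupportedOn ((ball G ({v} : Finset (Fin n)) (2 * p))ᶜ) (projE E2) := by
      refine projE_supported _ E2 (fun x y hxy => ?_)
      constructor
      · intro h u hu
        rw [← hxy u (Finset.mem_compl.mpr hu)]
        exact h u hu
      · intro h u hu
        rw [hxy u (Finset.mem_compl.mpr hu)]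
        exact h u hu
    have hlen : ((List.finRange p).map fun j => (β j, γ j)).length = p := by
      simp
    have hH1 : SupportedOn (ball G ({v} : Finset (Fin n)) p)
        (heis (qaoaU G f p β γ) (projE E1)) := by
      rw [qaoaU_eq_layersList G f p β γ]
      have := heis_layers_supported G f ((List.finRange p).map fun j => (β j, γ j))
        ({v} : Finset (Fin n)) (projE E1) hP1
      rwa [hlen] at this
    have hH2 : SupportedOn (ball G ((ball G ({v} : Finset (Fin n)) (2 * p))ᶜ) p)
        (heis (qaoaU G f p β γ) (projE E2)) := by
      rw [qaoaU_eq_layersList G f p β γ]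
      have := heis_layers_supported G f ((List.finRange p).map fun j => (β j, γ j))
        ((ball G ({v} : Finset (Fin n)) (2 * p))ᶜ) (projE E2) hP2
      rwa [hlen] at this
    have hdisj := ball_far_disjoint G v p
    have hunit : qaoaU G f p β γ * (qaoaU G f p β γ).conjTranspose = 1 := by
      rw [qaoaU_eq_layersList G f p β γ]
      exact mul_eq_one_comm.mp
        (layers_unitary G f ((List.finRange p).map fun j => (β j, γ j)))
    have key : (qaoaProbOf G f p β γ (E1 ∩ E2) : ℂ)
        = (qaoaProbOf G f p β γ E1 : ℂ) * (qaoaProbOf G f p β γ E2 : ℂ) := by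
      rw [← expVal_heis_proj G f p β γ (E1 ∩ E2), ← expVal_heis_proj G f p β γ E1,
        ← expVal_heis_proj G f p β γ E2]
      rw [← projE_mul, heis_mul hunit]
      exact expVal_mul_disjoint hH1 hH2 hdisj
    exact_mod_cast key
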